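/- Every tournament on at least 2^{k−1} vertices contains a transitive subtournament on k vertices. -/

import Mathlib

theorem stmt_14_aux (k : ℕ) : ∀ (V : Type u) [Fintype V] [DecidableEq V]
    (r : V → V → Prop) [DecidableRel r],
    (∀ v, ¬ r v v) →
    (∀ u v : V, u ≠ v → (r u v ↔ ¬ r v u)) →
    2 ^ (k - 1) ≤ Fintype.card V →
    ∃ f : Fin k → V, Function.Injective f ∧ ∀ i j : Fin k, i < j → r (f i) (f j) := by
  induction k with
  | zero =>
    intro V _ _ r _ _ _ _
    exact ⟨Fin.elim0, fun a => a.elim0, fun i => i.elim0⟩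
  | succ k ih =>
    intro V _ _ r _ hirr htour hn
    simp only [Nat.add_sub_cancel] at hn
    have hpos : 0 < Fintype.card V := lt_of_lt_of_le (Nat.two_pow_pos k) hn
    obtain ⟨v⟩ := Fintype.card_pos_iff.mp hpos
    rcases Nat.eq_zero_or_pos k with rfl | hk
    · refine ⟨fun _ => v, fun a b _ => by omega, fun i j h => ?_⟩
      rw [Fin.lt_def] at h
      have := i.isLt; have := j.isLt; omega
    · set A := Finset.univ.filter (fun u => r v u) with hA
      set B := Finset.univ.filter (fun u => u ≠ v ∧ ¬ r v u) with hB
      have hcard : Fintype.card V - 1 ≤ A.card + B.card := by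
        have hsub : (Finset.univ.erase v) ⊆ A ∪ B := by
          intro u hu
          simp only [Finset.mem_erase, Finset.mem_univ, and_true] at hu
          simp only [Finset.mem_union, hA, hB, Finset.mem_filter, Finset.mem_univ, true_and]
          tauto
        calc Fintype.card V - 1 = (Finset.univ.erase v).card := by
              rw [Finset.card_erase_of_mem (Finset.mem_univ v), Finset.card_univ]
          _ ≤ (A ∪ B).card := Finset.card_le_card hsub
          _ ≤ A.card + B.card := Finset.card_union_le A B
      have hpow : 2 ^ k = 2 * 2 ^ (k - 1) := by
        conv_lhs => rw [← Nat.sub_add_cancel hk, pow_succ]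
        ring
      have hab : 2 ^ (k - 1) ≤ A.card ∨ 2 ^ (k - 1) ≤ B.card := by omega
      rcases hab with h | h
      · -- recurse on A = out-neighbors of v, prepend v
        have hcardA : 2 ^ (k - 1) ≤ Fintype.card ↥A := by rwa [Fintype.card_coe]
        obtain ⟨g, hginj, hg⟩ := ih ↥A (fun a b => r a.1 b.1)
          (fun a => hirr a.1)
          (fun a b hab => htour a.1 b.1 (fun e => hab (Subtype.ext e))) hcardA
        have hmem : ∀ i, r v ((g i).1) := by
          intro i
          have := (g i).2
          simp only [hA, Finset.mem_filter, Finset.mem_univ, true_and] at this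
          exact this
        refine ⟨Fin.cases v (fun i => (g i).1), ?_, ?_⟩
        · intro a b heq
          induction a using Fin.cases with
          | zero =>
            induction b using Fin.cases with
            | zero => rfl
            | succ b =>
              simp only [Fin.cases_zero, Fin.cases_succ] at heq
              exact absurd (heq ▸ hmem b) (hirr v)
          | succ a =>
            induction b using Fin.cases with
            | zero =>
              simp only [Fin.cases_zero, Fin.cases_succ] at heq
              exact absurd (heq ▸ hmem a) (hirr v)
            | succ b =>
              simp only [Fin.cases_succ] at heq
              rw [hginj (Subtype.ext heq)]
        · intro i j hij
          induction i using Fin.cases with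
          | zero =>
            induction j using Fin.cases with
            | zero => exact absurd hij (lt_irrefl _)
            | succ j => simpa using hmem j
          | succ i =>
            induction j using Fin.cases with
            | zero => exact absurd hij (by simp [Fin.lt_def])
            | succ j =>
              simp only [Fin.cases_succ]
              exact hg i j (by rwa [Fin.succ_lt_succ_iff] at hij)
      · -- recurse on B = in-neighbors of v, append v
        have hcardB : 2 ^ (k - 1) ≤ Fintype.card ↥B := by rwa [Fintype.card_coe]
        obtain ⟨g, hginj, hg⟩ := ih ↥B (fun a b => r a.1 b.1)
          (fun a => hirr a.1)
          (fun a b hab => htour a.1 b.1 (fun e => hab (Subtype.ext e))) hcardB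
        have hmem : ∀ i, r ((g i).1) v := by
          intro i
          have := (g i).2
          simp only [hB, Finset.mem_filter, Finset.mem_univ, true_and] at this
          exact (htour _ _ this.1).mpr this.2
        have hne : ∀ i, (g i).1 ≠ v := by
          intro i
          have := (g i).2
          simp only [hB, Finset.mem_filter, Finset.mem_univ, true_and] at this
          exact this.1
        refine ⟨Fin.snoc (fun i => (g i).1) v, ?_, ?_⟩
        · intro a b heq
          induction a using Fin.lastCases with
          | last =>
            induction b using Fin.lastCases with
            | last => rfl
            | cast b =>
              simp only [Fin.snoc_last, Fin.snoc_castSucc] at heq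
              exact absurd heq.symm (hne b)
          | cast a =>
            induction b using Fin.lastCases with
            | last =>
              simp only [Fin.snoc_last, Fin.snoc_castSucc] at heq
              exact absurd heq (hne a)
            | cast b =>
              simp only [Fin.snoc_castSucc] at heq
              rw [hginj (Subtype.ext heq)]
        · intro i j hij
          induction j using Fin.lastCases with
          | last =>
            induction i using Fin.lastCases with
            | last => exact absurd hij (lt_irrefl _)
            | cast i =>
              simp only [Fin.snoc_last, Fin.snoc_castSucc]
              exact hmem i
          | cast j =>
            induction i using Fin.lastCases with
            | last =>
              exfalso
              rw [Fin.lt_def] at hij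
              simp only [Fin.val_last, Fin.coe_castSucc] at hij
              have := j.isLt; omega
            | cast i =>
              simp only [Fin.snoc_castSucc]
              exact hg i j (by rwa [Fin.castSucc_lt_castSucc_iff] at hij)

/-- Every tournament on at least `2^(k-1)` vertices contains a transitive
subtournament on `k` vertices. -/
theorem stmt_14 {V : Type*} [Fintype V] [DecidableEq V]
    (r : V → V → Prop) [DecidableRel r]
    (hirr : ∀ v, ¬ r v v)
    (htour : ∀ u v : V, u ≠ v → (r u v ↔ ¬ r v u))
    (k : ℕ) (hn : 2 ^ (k - 1) ≤ Fintype.card V) :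
    ∃ f : Fin k → V, Function.Injective f ∧ ∀ i j : Fin k, i < j → r (f i) (f j) := by
  exact stmt_14_aux k V r hirr htour hn
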